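/- Let a(s) = s² + a₁ s + a₂ and b(s) = s² + b₁ s + b₂ be Hurwitz stable monic real quadratic polynomials. Then there exists a real polynomial c(s) of degree 2 such that c(s)/a(s) and c(s)/b(s) are both strictly positive real. -/

import Mathlib

open Polynomial Complex

noncomputable def evalI (p : Polynomial ℝ) (ω : ℝ) : ℂ :=
  Polynomial.aeval ((ω : ℂ) * Complex.I) p

def HurwitzStable (p : Polynomial ℝ) : Prop :=
  ∀ z : ℂ, Polynomial.aeval z p = 0 → z.re < 0

def SPR (p q : Polynomial ℝ) : Prop :=
  p.degree = q.degree ∧ HurwitzStable q ∧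
    ∀ ω : ℝ, 0 < (evalI p ω / evalI q ω).re

lemma aeval_quad (a₁ a₂ : ℝ) (z : ℂ) :
    Polynomial.aeval z (X^2 + C a₁ * X + C a₂ : Polynomial ℝ) = z^2 + a₁*z + a₂ := by
  simp [map_add, map_mul, map_pow]

lemma degree_quad (t u : ℝ) : (X^2 + C t * X + C u : Polynomial ℝ).degree = 2 := by
  compute_degree!

lemma evalI_re (t u ω : ℝ) : (evalI (X^2 + C t * X + C u) ω).re = u - ω^2 := by
  rw [evalI, aeval_quad]
  simp [pow_two]
  ring

lemma evalI_im (t u ω : ℝ) : (evalI (X^2 + C t * X + C u) ω).im = t * ω := by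
  rw [evalI, aeval_quad]
  simp [pow_two]

lemma hurwitz_coeffs (a₁ a₂ : ℝ)
    (h : HurwitzStable (X^2 + C a₁ * X + C a₂)) : 0 < a₁ ∧ 0 < a₂ := by
  rcases le_or_gt (a₁^2 - 4*a₂) 0 with hd | hd
  · set e := 4*a₂ - a₁^2 with he
    have he0 : 0 ≤ e := by linarith
    set z : ℂ := (-(a₁:ℂ) + Real.sqrt e * Complex.I)/2 with hz
    have hs : (Real.sqrt e : ℂ)^2 = (e : ℂ) := by
      rw [← Complex.ofReal_pow, Real.sq_sqrt he0]
    have hroot : Polynomial.aeval z (X^2 + C a₁ * X + C a₂ : Polynomial ℝ) = 0 := by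
      rw [aeval_quad, hz]
      have hec : (e:ℂ) = 4*(a₂:ℂ) - (a₁:ℂ)^2 := by push_cast [he]; ring
      linear_combination (Complex.I^2 * hs + (e:ℂ) * Complex.I_sq)/4 - hec/4
    have hre := h z hroot
    have hzre : z.re = -a₁/2 := by rw [hz]; simp
    rw [hzre] at hre
    exact ⟨by linarith, by nlinarith [sq_nonneg a₁]⟩
  · have hd0 : 0 ≤ a₁^2 - 4*a₂ := hd.le
    have key : ∀ s : ℝ, s^2 = a₁^2 - 4*a₂ → (-a₁ + s)/2 < 0 := by
      intro s hs
      have h0 : ((-a₁+s)/2)^2 + a₁*((-a₁+s)/2) + a₂ = 0 := by nlinarith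
      have h0c : (((-a₁+s)/2 : ℝ) : ℂ)^2 + (a₁:ℂ)*(((-a₁+s)/2 : ℝ):ℂ) + (a₂:ℂ) = 0 := by
        exact_mod_cast congrArg (fun x : ℝ => (x:ℂ)) h0
      have hroot : Polynomial.aeval (((-a₁ + s)/2 : ℝ) : ℂ) (X^2 + C a₁ * X + C a₂ : Polynomial ℝ) = 0 := by
        rw [aeval_quad]; exact h0c
      have := h _ hroot
      simpa using this
    have h1 := key (Real.sqrt (a₁^2-4*a₂)) (Real.sq_sqrt hd0)
    have h2 := key (-Real.sqrt (a₁^2-4*a₂)) (by rw [neg_pow]; simpa using Real.sq_sqrt hd0)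
    have hs0 : 0 ≤ Real.sqrt (a₁^2-4*a₂) := Real.sqrt_nonneg _
    have ha1 : 0 < a₁ := by linarith
    have hlt : Real.sqrt (a₁^2-4*a₂) < a₁ := by linarith
    have hsq := Real.sq_sqrt hd0
    refine ⟨ha1, ?_⟩
    nlinarith [hlt, hsq]

lemma spr_quad (a₁ a₂ c₁ c₂ : ℝ)
    (hA : HurwitzStable (X^2 + C a₁ * X + C a₂))
    (ha1 : 0 < a₁) (ha2 : 0 < a₂) (hc2 : 0 < c₂)
    (hc : a₂ + c₂ ≤ c₁ * a₁) :
    SPR (X^2 + C c₁ * X + C c₂) (X^2 + C a₁ * X + C a₂) := by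
  refine ⟨by rw [degree_quad, degree_quad], hA, fun ω => ?_⟩
  have hv : evalI (X^2 + C a₁ * X + C a₂) ω ≠ 0 := by
    intro h0
    have := hA ((ω:ℂ) * Complex.I) h0
    simp at this
  have hN : 0 < Complex.normSq (evalI (X^2 + C a₁ * X + C a₂) ω) :=
    Complex.normSq_pos.mpr hv
  rw [Complex.div_re, ← add_div]
  apply div_pos _ hN
  rw [evalI_re, evalI_im, evalI_re, evalI_im]
  nlinarith [sq_nonneg ω, sq_nonneg (ω^2), mul_pos ha2 hc2,
    mul_nonneg (sub_nonneg.2 hc) (sq_nonneg ω)]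

theorem spr_synthesis_deg_two (a₁ a₂ b₁ b₂ : ℝ)
    (hA : HurwitzStable (Polynomial.X ^ 2 + Polynomial.C a₁ * Polynomial.X + Polynomial.C a₂))
    (hB : HurwitzStable (Polynomial.X ^ 2 + Polynomial.C b₁ * Polynomial.X + Polynomial.C b₂)) :
    ∃ c : Polynomial ℝ, c.degree = 2 ∧
      SPR c (Polynomial.X ^ 2 + Polynomial.C a₁ * Polynomial.X + Polynomial.C a₂) ∧
      SPR c (Polynomial.X ^ 2 + Polynomial.C b₁ * Polynomial.X + Polynomial.C b₂) := by
  obtain ⟨ha1, ha2⟩ := hurwitz_coeffs a₁ a₂ hA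
  obtain ⟨hb1, hb2⟩ := hurwitz_coeffs b₁ b₂ hB
  set c₁ := max ((a₂+1)/a₁) ((b₂+1)/b₁) with hc1
  refine ⟨X^2 + C c₁ * X + C 1, degree_quad _ _, ?_, ?_⟩
  · refine spr_quad a₁ a₂ c₁ 1 hA ha1 ha2 one_pos ?_
    have : (a₂+1)/a₁ ≤ c₁ := le_max_left _ _
    rw [div_le_iff₀ ha1] at this
    linarith
  · refine spr_quad b₁ b₂ c₁ 1 hB hb1 hb2 one_pos ?_
    have : (b₂+1)/b₁ ≤ c₁ := le_max_right _ _
    rw [div_le_iff₀ hb1] at this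
    linarith
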